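/- Factorization direction of Kwapień's theorem: let T ∈ L(E₁,…,E_m;F) be positive (p₁,…,p_m;r)-dominated, with Pietsch domination measures μ_j on B_{E_j*}⁺ and μ on B_{F**}⁺. Define R_j⁰ : E_j → L_{p_j}(B_{E_j*}⁺, μ_j) by R_j⁰(x)(φ) = φ(x), let X_j be the closure of the range of R_j⁰, and R_j : E_j → X_j the induced operator. Then each R_j is positive p_j-summing with π⁺_{p_j}(R_j) ≤ 1, and the map S₀(R₁⁰(x¹),…,R_m⁰(x^m)) := T(x¹,…,x^m) is well defined and bounded on R₁⁰(E₁) × ⋯ × R_m⁰(E_m), extending to a Cohen positive strongly r*-summing m-linear operator S : X₁ × ⋯ × X_m → F with T = S ∘ (R₁,…,R_m). -/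

import Mathlib

open MeasureTheory

universe u v

/-- The positive part of the dual unit ball, with the weak-* topology. -/
def PosDualBall (E : Type*) [NormedAddCommGroup E] [Lattice E] [IsOrderedAddMonoid E] [HasSolidNorm E] [NormedSpace ℝ E] : Type _ :=
  {φ : WeakDual ℝ E // (∀ x : E, |φ x| ≤ ‖x‖) ∧ ∀ x : E, 0 ≤ x → 0 ≤ φ x}

instance (E : Type*) [NormedAddCommGroup E] [Lattice E] [IsOrderedAddMonoid E] [HasSolidNorm E] [NormedSpace ℝ E] :
    TopologicalSpace (PosDualBall E) :=
  inferInstanceAs (TopologicalSpace (Subtype _))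

noncomputable instance (E : Type*) [NormedAddCommGroup E] [Lattice E] [IsOrderedAddMonoid E] [HasSolidNorm E] [NormedSpace ℝ E] :
    MeasurableSpace (PosDualBall E) := borel _

/-- The positive part of the bidual unit ball, with the weak-* topology. -/
def PosBidualBall (F : Type*) [NormedAddCommGroup F] [Lattice F] [IsOrderedAddMonoid F] [HasSolidNorm F] [NormedSpace ℝ F] : Type _ :=
  {ψ : WeakDual ℝ (F →L[ℝ] ℝ) // (∀ φ : F →L[ℝ] ℝ, |ψ φ| ≤ ‖φ‖) ∧
    ∀ φ : F →L[ℝ] ℝ, (∀ y, 0 ≤ y → 0 ≤ φ y) → 0 ≤ ψ φ}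

instance (F : Type*) [NormedAddCommGroup F] [Lattice F] [IsOrderedAddMonoid F] [HasSolidNorm F] [NormedSpace ℝ F] :
    TopologicalSpace (PosBidualBall F) :=
  inferInstanceAs (TopologicalSpace (Subtype _))

noncomputable instance (F : Type*) [NormedAddCommGroup F] [Lattice F] [IsOrderedAddMonoid F] [HasSolidNorm F] [NormedSpace ℝ F] :
    MeasurableSpace (PosBidualBall F) := borel _

/-- The weak `ℓ_p` norm of a finite positive family, over the positive dual unit ball. -/
noncomputable def wnormPos {E : Type*} [NormedAddCommGroup E] [Lattice E] [IsOrderedAddMonoid E] [HasSolidNorm E] [NormedSpace ℝ E]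
    (p : ℝ) {n : ℕ} (x : Fin n → E) : ℝ :=
  sSup {s : ℝ | ∃ φ : E →L[ℝ] ℝ, ‖φ‖ ≤ 1 ∧ (∀ y, 0 ≤ y → 0 ≤ φ y) ∧
    s = (∑ i, (φ (x i)) ^ p) ^ (1 / p)}

/-- `R : E → X` is positive `p`-summing with constant `C`. -/
def IsPosSumming {E : Type*} [NormedAddCommGroup E] [Lattice E] [IsOrderedAddMonoid E] [HasSolidNorm E] [NormedSpace ℝ E]
    {X : Type*} [NormedAddCommGroup X] [NormedSpace ℝ X]
    (p : ℝ) (R : E →L[ℝ] X) (C : ℝ) : Prop :=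
  ∀ (n : ℕ) (x : Fin n → E), (∀ i, 0 ≤ x i) →
    (∑ i, ‖R (x i)‖ ^ p) ^ (1 / p) ≤ C * wnormPos p x

/-- `S` is Cohen positive strongly `r*`-summing with constant `C`. -/
def IsCohenPosStronglySumming {m : ℕ} {X : Fin m → Type*}
    [∀ j, NormedAddCommGroup (X j)] [∀ j, NormedSpace ℝ (X j)]
    {F : Type*} [NormedAddCommGroup F] [Lattice F] [IsOrderedAddMonoid F] [HasSolidNorm F] [NormedSpace ℝ F]
    (rstar r : ℝ) (S : ContinuousMultilinearMap ℝ X F) (C : ℝ) : Prop :=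
  ∀ (n : ℕ) (z : Fin n → ∀ j, X j) (y : Fin n → (F →L[ℝ] ℝ)),
    (∀ i, ∀ w, 0 ≤ w → 0 ≤ y i w) →
    ∑ i, |y i (S (z i))| ≤
      C * (∑ i, ∏ j, ‖z i j‖ ^ rstar) ^ (1 / rstar) *
        sSup {s : ℝ | ∃ ψ : (F →L[ℝ] ℝ) →L[ℝ] ℝ, ‖ψ‖ ≤ 1 ∧
          s = (∑ i, |ψ (y i)| ^ r) ^ (1 / r)}

set_option linter.unusedSectionVars false
open scoped ENNReal

set_option maxHeartbeats 1000000

section SmulOrder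
variable {G : Type*} [NormedAddCommGroup G] [Lattice G] [IsOrderedAddMonoid G] [HasSolidNorm G] [NormedSpace ℝ G]

lemma pow2_nsmul_semiclosed {a : G} : ∀ (n : ℕ), 0 ≤ (2 ^ n) • a → 0 ≤ a := by
  intro n
  induction n with
  | zero => simpa using id
  | succ k ih =>
    intro h
    apply ih
    apply nsmul_two_semiclosed
    rw [smul_smul]
    rwa [pow_succ'] at h

lemma rsmul_nonneg {c : ℝ} {x : G} (hc : 0 ≤ c) (hx : 0 ≤ x) : 0 ≤ c • x := by
  have hdy : ∀ k n : ℕ, 0 ≤ (((k : ℝ) / 2 ^ n)) • x := by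
    intro k n
    apply pow2_nsmul_semiclosed n
    have h1 : (2 ^ n : ℕ) • (((k : ℝ) / 2 ^ n) • x) = k • x := by
      rw [← Nat.cast_smul_eq_nsmul ℝ (2 ^ n), smul_smul, ← Nat.cast_smul_eq_nsmul ℝ k]
      congr 1
      push_cast
      field_simp
    rw [h1]
    exact nsmul_nonneg hx k
  set u : ℕ → ℝ := fun n => ((⌊c * 2 ^ n⌋₊ : ℝ) / 2 ^ n) with hu
  have hlim : Filter.Tendsto u Filter.atTop (nhds c) := by
    have hsq : ∀ n : ℕ, |u n - c| ≤ (2 ^ n : ℝ)⁻¹ := by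
      intro n
      have h2 : (0:ℝ) < 2 ^ n := by positivity
      have hA : (⌊c * 2 ^ n⌋₊ : ℝ) ≤ c * 2 ^ n := Nat.floor_le (by positivity)
      have hB : c * 2 ^ n < (⌊c * 2 ^ n⌋₊ : ℝ) + 1 := Nat.lt_floor_add_one _
      have hun : u n = (⌊c * 2 ^ n⌋₊ : ℝ) / 2 ^ n := rfl
      have h3 : u n ≤ c := by rw [hun, div_le_iff₀ h2]; linarith
      have h4 : c ≤ u n + (2 ^ n : ℝ)⁻¹ := by
        have e1 : u n + (2 ^ n : ℝ)⁻¹ = ((⌊c * 2 ^ n⌋₊ : ℝ) + 1) / 2 ^ n := by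
          rw [hun, add_div]; norm_num
        rw [e1, le_div_iff₀ h2]; linarith
      rw [abs_le]
      constructor <;> [linarith; linarith [inv_nonneg.mpr h2.le]]
    have h0 : Filter.Tendsto (fun n : ℕ => (2 ^ n : ℝ)⁻¹) Filter.atTop (nhds 0) := by
      have := tendsto_pow_atTop_nhds_zero_of_lt_one (by norm_num : (0:ℝ) ≤ 2⁻¹)
        (by norm_num : (2:ℝ)⁻¹ < 1)
      exact this.congr (fun n => by rw [inv_pow])
    have hz : Filter.Tendsto (fun n => u n - c) Filter.atTop (nhds 0) :=
      squeeze_zero_norm hsq h0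
    have := hz.add (tendsto_const_nhds (x := c))
    simpa using this.congr (fun n => by ring)
  have hcl : IsClosed {y : G | 0 ≤ y} := isClosed_nonneg
  have htd : Filter.Tendsto (fun n => u n • x) Filter.atTop (nhds (c • x)) :=
    hlim.smul tendsto_const_nhds
  exact hcl.mem_of_tendsto htd (Filter.Eventually.of_forall (fun n => hdy _ n))

lemma rsmul_mono {c : ℝ} (hc : 0 ≤ c) {x y : G} (hxy : x ≤ y) : c • x ≤ c • y := by
  have := rsmul_nonneg hc (sub_nonneg.2 hxy)
  rw [smul_sub, sub_nonneg] at this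
  exact this

lemma rsmul_sup {c : ℝ} (hc : 0 < c) (a b : G) : c • (a ⊔ b) = c • a ⊔ c • b := by
  apply le_antisymm
  · have h1 : a ≤ c⁻¹ • (c • a ⊔ c • b) := by
      have := rsmul_mono (inv_nonneg.2 hc.le) (le_sup_left : c • a ≤ c • a ⊔ c • b)
      rwa [inv_smul_smul₀ (ne_of_gt hc)] at this
    have h2 : b ≤ c⁻¹ • (c • a ⊔ c • b) := by
      have := rsmul_mono (inv_nonneg.2 hc.le) (le_sup_right : c • b ≤ c • a ⊔ c • b)
      rwa [inv_smul_smul₀ (ne_of_gt hc)] at this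
    have := rsmul_mono hc.le (sup_le h1 h2)
    rwa [smul_inv_smul₀ (ne_of_gt hc)] at this
  · exact sup_le (rsmul_mono hc.le le_sup_left) (rsmul_mono hc.le le_sup_right)

lemma rsmul_posPart {c : ℝ} (hc : 0 ≤ c) (x : G) : (c • x)⁺ = c • x⁺ := by
  rcases eq_or_lt_of_le hc with h | h
  · simp [← h]
  · rw [posPart_def, posPart_def, rsmul_sup h x 0, smul_zero]

lemma posPart_add_le' (a b : G) : (a + b)⁺ ≤ a⁺ + b⁺ :=
  sup_le (add_le_add (le_posPart a) (le_posPart b))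
    (add_nonneg (posPart_nonneg a) (posPart_nonneg b))

lemma norm_posPart_le (x : G) : ‖x⁺‖ ≤ ‖x‖ := by
  apply norm_le_norm_of_abs_le_abs
  rw [abs_of_nonneg (posPart_nonneg x), posPart_def]
  exact sup_le (le_abs_self x) (abs_nonneg x)

lemma exists_pos_functional (w : G) :
    ∃ φ : G →L[ℝ] ℝ, (∀ z : G, 0 ≤ z → 0 ≤ φ z) ∧ ‖φ‖ ≤ 1 ∧ φ w = ‖w⁺‖ := by
  by_cases hw : w = 0
  · refine ⟨0, by simp, by simp, by simp [hw]⟩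
  · set N : G → ℝ := fun x => ‖x⁺‖ with hN
    have N_hom : ∀ c : ℝ, 0 < c → ∀ x : G, N (c • x) = c * N x := by
      intro c hc x
      rw [hN]; simp only
      rw [rsmul_posPart hc.le, norm_smul, Real.norm_eq_abs, abs_of_pos hc]
    have N_add : ∀ x y : G, N (x + y) ≤ N x + N y := by
      intro x y
      have h1 : ‖(x + y)⁺‖ ≤ ‖x⁺ + y⁺‖ := by
        apply norm_le_norm_of_abs_le_abs
        rw [abs_of_nonneg (posPart_nonneg _),
          abs_of_nonneg (add_nonneg (posPart_nonneg x) (posPart_nonneg y))]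
        exact posPart_add_le' x y
      exact h1.trans (norm_add_le _ _)
    -- the linear functional on the span of w
    let e := LinearEquiv.toSpanNonzeroSingleton ℝ G w hw
    let f : (Submodule.span ℝ {w}) →ₗ[ℝ] ℝ := ‖w⁺‖ • (e.symm : (Submodule.span ℝ {w}) →ₗ[ℝ] ℝ)
    have hfw : f ⟨w, Submodule.mem_span_singleton_self w⟩ = ‖w⁺‖ := by
      have h1 : e 1 = ⟨w, Submodule.mem_span_singleton_self w⟩ := by
        apply Subtype.ext
        simp [e, LinearEquiv.toSpanNonzeroSingleton]
      have : e.symm ⟨w, Submodule.mem_span_singleton_self w⟩ = 1 := by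
        rw [← h1, LinearEquiv.symm_apply_apply]
      simp [f, this]
    have hf : ∀ v : (Submodule.span ℝ {w}), f v ≤ N (v : G) := by
      intro v
      obtain ⟨t, ht⟩ := Submodule.mem_span_singleton.mp v.2
      have hv : v = t • ⟨w, Submodule.mem_span_singleton_self w⟩ := by
        apply Subtype.ext; simpa using ht.symm
      rw [hv, _root_.map_smul, smul_eq_mul, hfw]
      rcases le_or_gt 0 t with h | h
      · rcases eq_or_lt_of_le h with h0 | h0
        · simp [← h0, hN]
        · have : ((t • (⟨w, Submodule.mem_span_singleton_self w⟩ : Submodule.span ℝ {w}) : Submodule.span ℝ {w}) : G) = t • w := rfl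
          rw [this, N_hom t h0 w]
      · have hnn : 0 ≤ N ((t • (⟨w, Submodule.mem_span_singleton_self w⟩ : Submodule.span ℝ {w}) : Submodule.span ℝ {w}) : G) := norm_nonneg _
        have : t * ‖w⁺‖ ≤ 0 := mul_nonpos_of_nonpos_of_nonneg h.le (norm_nonneg _)
        linarith
    obtain ⟨g, hg_eq, hg_le⟩ := exists_extension_of_le_sublinear ⟨Submodule.span ℝ {w}, f⟩ N N_hom N_add hf
    have hgb : ∀ x : G, |g x| ≤ ‖x‖ := by
      intro x
      rw [abs_le]
      constructor
      · have h1 : g (-x) ≤ N (-x) := hg_le (-x)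
        have h2 : N (-x) ≤ ‖x‖ := by
          rw [hN]; simp only
          calc ‖(-x)⁺‖ ≤ ‖-x‖ := norm_posPart_le _
            _ = ‖x‖ := norm_neg x
        rw [map_neg] at h1
        linarith
      · exact (hg_le x).trans ((norm_posPart_le x))
    let φ : G →L[ℝ] ℝ := LinearMap.mkContinuous g 1 (fun x => by simpa using hgb x)
    refine ⟨φ, ?_, ?_, ?_⟩
    · intro z hz
      have h1 : g (-z) ≤ N (-z) := hg_le (-z)
      have h2 : N (-z) = 0 := by
        rw [hN]; simp only
        have : (-z)⁺ = z⁻ := by rw [← posPart_neg]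
        rw [this, negPart_eq_zero.mpr hz, norm_zero]
      have : φ z = g z := rfl
      rw [this]
      rw [map_neg] at h1
      linarith
    · exact LinearMap.mkContinuous_norm_le g zero_le_one _
    · have : φ w = g w := rfl
      rw [this, hg_eq ⟨w, Submodule.mem_span_singleton_self w⟩]
      exact hfw
end SmulOrder

section Gfun

variable {E : Type u} [NormedAddCommGroup E] [Lattice E] [IsOrderedAddMonoid E] [HasSolidNorm E] [NormedSpace ℝ E]

instance : BorelSpace (PosDualBall E) := ⟨rfl⟩

lemma continuous_evalPDB (x : E) : Continuous (fun ω : PosDualBall E => ω.1 x) := by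
  have h1 : Continuous (fun φ : WeakDual ℝ E => φ x) := WeakDual.eval_continuous x
  exact h1.comp continuous_subtype_val

lemma continuous_rpow_const {p : ℝ} (hp : 0 < p) : Continuous (fun t : ℝ => t ^ p) := by
  rw [continuous_iff_continuousAt]
  intro t
  exact Real.continuousAt_rpow_const t p (Or.inr hp.le)

variable (p : ℝ) (μ : Measure (PosDualBall E))

noncomputable def Ifun (x : E) : ℝ := ∫ ω : PosDualBall E, (ω.1 x) ^ p ∂μ

noncomputable def gfun (x : E) : ℝ := (Ifun p μ x) ^ (1 / p)

variable {p μ}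
variable [IsProbabilityMeasure μ] (hp : 1 ≤ p)
include hp

lemma integrable_eval_rpow (x : E) :
    Integrable (fun ω : PosDualBall E => (ω.1 x) ^ p) μ := by
  have hc : Continuous (fun ω : PosDualBall E => (ω.1 x) ^ p) :=
    (continuous_rpow_const (lt_of_lt_of_le zero_lt_one hp)).comp (continuous_evalPDB x)
  refine Integrable.mono' (integrable_const (‖x‖ ^ p)) hc.aestronglyMeasurable ?_
  refine Filter.Eventually.of_forall (fun ω => ?_)
  rw [Real.norm_eq_abs]
  calc |(ω.1 x) ^ p| ≤ |ω.1 x| ^ p := Real.abs_rpow_le_abs_rpow _ _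
    _ ≤ ‖x‖ ^ p := Real.rpow_le_rpow (abs_nonneg _) (ω.2.1 x) (le_trans zero_le_one hp)

lemma Ifun_nonneg {x : E} (hx : 0 ≤ x) : 0 ≤ Ifun p μ x := by
  apply integral_nonneg
  intro ω
  exact Real.rpow_nonneg (ω.2.2 x hx) p

lemma gfun_nonneg {x : E} (hx : 0 ≤ x) : 0 ≤ gfun p μ x :=
  Real.rpow_nonneg (Ifun_nonneg hp hx) _

lemma Ifun_mono {a b : E} (ha : 0 ≤ a) (hab : a ≤ b) : Ifun p μ a ≤ Ifun p μ b := by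
  refine integral_mono (integrable_eval_rpow hp a) (integrable_eval_rpow hp b) (fun ω => ?_)
  have h1 : 0 ≤ ω.1 a := ω.2.2 a ha
  have h2 : ω.1 a ≤ ω.1 b := by
    have := ω.2.2 (b - a) (sub_nonneg.2 hab)
    rw [map_sub] at this
    linarith
  exact Real.rpow_le_rpow h1 h2 (le_trans zero_le_one hp)

lemma gfun_mono {a b : E} (ha : 0 ≤ a) (hab : a ≤ b) : gfun p μ a ≤ gfun p μ b :=
  Real.rpow_le_rpow (Ifun_nonneg hp ha) (Ifun_mono hp ha hab) (by positivity)

lemma gfun_zero : gfun p μ (0 : E) = 0 := by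
  have hp0 : p ≠ 0 := by positivity
  have : Ifun p μ (0 : E) = 0 := by
    unfold Ifun
    simp [Real.zero_rpow hp0]
  rw [gfun, this, Real.zero_rpow (by positivity : (1:ℝ)/p ≠ 0)]

lemma gfun_le_norm {x : E} (hx : 0 ≤ x) : gfun p μ x ≤ ‖x‖ := by
  have h1 : Ifun p μ x ≤ ‖x‖ ^ p := by
    have := integral_mono (integrable_eval_rpow hp x) (integrable_const (μ := μ) (‖x‖ ^ p))
      (fun ω => Real.rpow_le_rpow (ω.2.2 x hx) ((le_abs_self _).trans (ω.2.1 x))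
        (le_trans zero_le_one hp))
    simpa [Ifun] using this
  calc gfun p μ x ≤ (‖x‖ ^ p) ^ (1/p) :=
        Real.rpow_le_rpow (Ifun_nonneg hp hx) h1 (by positivity)
    _ = ‖x‖ := by
        rw [← Real.rpow_mul (norm_nonneg x), mul_one_div,
          div_self (ne_of_gt (lt_of_lt_of_le zero_lt_one hp)), Real.rpow_one]

lemma gfun_smul {c : ℝ} (hc : 0 ≤ c) {x : E} (hx : 0 ≤ x) :
    gfun p μ (c • x) = c * gfun p μ x := by
  have hp0 : (0:ℝ) < p := lt_of_lt_of_le zero_lt_one hp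
  have h1 : Ifun p μ (c • x) = c ^ p * Ifun p μ x := by
    unfold Ifun
    have heq : (fun ω : PosDualBall E => (ω.1 (c • x)) ^ p)
        = fun ω : PosDualBall E => (c ^ p) • ((ω.1 x) ^ p) := by
      funext ω
      rw [_root_.map_smul, smul_eq_mul, Real.mul_rpow hc (ω.2.2 x hx), smul_eq_mul]
    rw [heq, integral_smul, smul_eq_mul]
  rw [gfun, gfun, h1, Real.mul_rpow (by positivity) (Ifun_nonneg hp hx)]
  congr 1
  rw [← Real.rpow_mul hc, mul_one_div, div_self (ne_of_gt hp0), Real.rpow_one]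

lemma gfun_add_le {a b : E} (ha : 0 ≤ a) (hb : 0 ≤ b) :
    gfun p μ (a + b) ≤ gfun p μ a + gfun p μ b := by
  have hp0 : (0:ℝ) < p := lt_of_lt_of_le zero_lt_one hp
  set F : E → PosDualBall E → ℝ≥0∞ := fun x ω => ENNReal.ofReal (ω.1 x) with hF
  have hmeas : ∀ x : E, Measurable (F x) := fun x =>
    (continuous_evalPDB x).measurable.ennreal_ofReal
  set Lam : E → ℝ≥0∞ := fun x => ∫⁻ ω, (F x ω) ^ p ∂μ with hLam
  have hfin : ∀ x : E, Lam x ≠ ⊤ := by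
    intro x
    have hbd : ∀ ω : PosDualBall E, (F x ω) ^ p ≤ ENNReal.ofReal (‖x‖ ^ p) := by
      intro ω
      rw [← ENNReal.ofReal_rpow_of_nonneg (norm_nonneg x) hp0.le]
      apply ENNReal.rpow_le_rpow _ hp0.le
      exact ENNReal.ofReal_le_ofReal ((le_abs_self _).trans (ω.2.1 x))
    have : ∫⁻ ω, (F x ω) ^ p ∂μ ≤ ∫⁻ _ω, ENNReal.ofReal (‖x‖ ^ p) ∂μ := lintegral_mono hbd
    rw [lintegral_const] at this
    simp only [measure_univ, mul_one] at this
    exact ne_top_of_le_ne_top ENNReal.ofReal_ne_top this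
  have hIlam : ∀ x : E, 0 ≤ x → Ifun p μ x = (Lam x).toReal := by
    intro x hx
    have h1 : Ifun p μ x = (∫⁻ ω, ENNReal.ofReal ((ω.1 x) ^ p) ∂μ).toReal := by
      apply integral_eq_lintegral_of_nonneg_ae
      · exact Filter.Eventually.of_forall (fun ω => Real.rpow_nonneg (ω.2.2 x hx) p)
      · exact ((continuous_rpow_const hp0).comp (continuous_evalPDB x)).aestronglyMeasurable
    rw [h1]
    congr 1
    apply lintegral_congr
    intro ω
    rw [ENNReal.ofReal_rpow_of_nonneg (ω.2.2 x hx) hp0.le]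
  have hglam : ∀ x : E, 0 ≤ x → gfun p μ x = ((Lam x) ^ (1/p)).toReal := by
    intro x hx
    rw [gfun, hIlam x hx, ENNReal.toReal_rpow]
  have hFadd : F (a + b) = F a + F b := by
    funext ω
    simp only [hF, Pi.add_apply, map_add]
    rw [ENNReal.ofReal_add (ω.2.2 a ha) (ω.2.2 b hb)]
  have hmink : (Lam (a+b)) ^ (1/p) ≤ (Lam a) ^ (1/p) + (Lam b) ^ (1/p) := by
    rw [hLam]
    simp only
    rw [show (fun ω => F (a+b) ω ^ p) = fun ω => (F a ω + F b ω) ^ p by rw [hFadd]; rfl]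
    exact ENNReal.lintegral_Lp_add_le (hmeas a).aemeasurable (hmeas b).aemeasurable hp
  have hfin' : ∀ x : E, (Lam x) ^ (1/p) ≠ ⊤ := fun x =>
    ENNReal.rpow_ne_top_of_nonneg (by positivity) (hfin x)
  rw [hglam _ (add_nonneg ha hb), hglam _ ha, hglam _ hb]
  rw [← ENNReal.toReal_add (hfin' a) (hfin' b)]
  exact ENNReal.toReal_mono (by
    exact ENNReal.add_ne_top.mpr ⟨hfin' a, hfin' b⟩) hmink

end Gfun

section Nnorm
variable {E : Type u} [NormedAddCommGroup E] [Lattice E] [IsOrderedAddMonoid E] [HasSolidNorm E] [NormedSpace ℝ E]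
variable (p : ℝ) (μ : Measure (PosDualBall E))

noncomputable def Nnorm (x : E) : ℝ := gfun p μ x⁺ + gfun p μ x⁻

variable {p μ} [IsProbabilityMeasure μ] (hp : 1 ≤ p)
include hp

lemma Nnorm_nonneg (x : E) : 0 ≤ Nnorm p μ x :=
  add_nonneg (gfun_nonneg hp (posPart_nonneg x)) (gfun_nonneg hp (negPart_nonneg x))

lemma Nnorm_of_nonneg {x : E} (hx : 0 ≤ x) : Nnorm p μ x = gfun p μ x := by
  rw [Nnorm, posPart_eq_self.mpr hx, negPart_eq_zero.mpr hx, gfun_zero (p := p) (μ := μ) hp, add_zero]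

lemma Nnorm_zero : Nnorm p μ (0 : E) = 0 := by
  rw [Nnorm_of_nonneg hp le_rfl, gfun_zero (p := p) (μ := μ) hp]

lemma Nnorm_neg (x : E) : Nnorm p μ (-x) = Nnorm p μ x := by
  rw [Nnorm, Nnorm, posPart_neg, negPart_neg, add_comm]

lemma Nnorm_add_le (x y : E) : Nnorm p μ (x + y) ≤ Nnorm p μ x + Nnorm p μ y := by
  have h1 : gfun p μ (x + y)⁺ ≤ gfun p μ x⁺ + gfun p μ y⁺ :=
    (gfun_mono hp (posPart_nonneg _) (posPart_add_le' x y)).trans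
      (gfun_add_le hp (posPart_nonneg x) (posPart_nonneg y))
  have h2 : gfun p μ (x + y)⁻ ≤ gfun p μ x⁻ + gfun p μ y⁻ := by
    have e1 : (x + y)⁻ = (-x + -y)⁺ := by rw [← posPart_neg, neg_add]
    have e2 : (-x)⁺ = x⁻ := posPart_neg x
    have e3 : (-y)⁺ = y⁻ := posPart_neg y
    rw [e1, ← e2, ← e3]
    exact (gfun_mono hp (posPart_nonneg _) (posPart_add_le' (-x) (-y))).trans
      (gfun_add_le hp (posPart_nonneg (-x)) (posPart_nonneg (-y)))
  have := add_le_add h1 h2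
  rw [Nnorm, Nnorm, Nnorm]
  linarith

lemma Nnorm_smul (c : ℝ) (x : E) : Nnorm p μ (c • x) = |c| * Nnorm p μ x := by
  have hpos : ∀ (d : ℝ), 0 ≤ d → Nnorm p μ (d • x) = d * Nnorm p μ x := by
    intro d hd
    have h1 : (d • x)⁺ = d • x⁺ := rsmul_posPart hd x
    have h2 : (d • x)⁻ = d • x⁻ := by
      rw [← posPart_neg, ← smul_neg, rsmul_posPart hd, posPart_neg]
    rw [Nnorm, h1, h2, gfun_smul hp hd (posPart_nonneg x),
      gfun_smul hp hd (negPart_nonneg x), Nnorm, mul_add]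
  rcases le_or_gt 0 c with h | h
  · rw [hpos c h, abs_of_nonneg h]
  · have : c • x = -(|c| • x) := by
      rw [abs_of_neg h, neg_smul, neg_neg]
    rw [this, Nnorm_neg hp, hpos |c| (abs_nonneg c)]

lemma Nnorm_le_two_norm (x : E) : Nnorm p μ x ≤ 2 * ‖x‖ := by
  have h1 : gfun p μ x⁺ ≤ ‖x‖ := (gfun_le_norm hp (posPart_nonneg x)).trans (norm_posPart_le x)
  have h2 : gfun p μ x⁻ ≤ ‖x‖ := by
    have ha : gfun p μ x⁻ ≤ ‖x⁻‖ := gfun_le_norm hp (negPart_nonneg x)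
    have hb : ‖x⁻‖ ≤ ‖x‖ := by
      rw [← posPart_neg x]
      exact (norm_posPart_le (-x)).trans_eq (norm_neg x)
    exact ha.trans hb
  rw [Nnorm]; linarith

lemma Nnorm_congr {x y : E} (h : Nnorm p μ (x - y) = 0) : Nnorm p μ x = Nnorm p μ y := by
  have h1 : Nnorm p μ x ≤ Nnorm p μ y := by
    have := Nnorm_add_le (μ := μ) hp y (x - y)
    rw [add_sub_cancel] at this
    rw [h] at this; linarith
  have h2 : Nnorm p μ y ≤ Nnorm p μ x := by
    have := Nnorm_add_le (μ := μ) hp x (y - x)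
    rw [add_sub_cancel] at this
    have hyx : Nnorm p μ (y - x) = 0 := by
      rw [← Nnorm_neg hp, neg_sub] at h; exact h
    rw [hyx] at this; linarith
  linarith

end Nnorm

section Quot
variable {E : Type u} [NormedAddCommGroup E] [Lattice E] [IsOrderedAddMonoid E] [HasSolidNorm E] [NormedSpace ℝ E]
variable (p : ℝ) (μ : Measure (PosDualBall E)) [IsProbabilityMeasure μ] (hp : 1 ≤ p)

noncomputable def nullSpace : Submodule ℝ E where
  carrier := {x | Nnorm p μ x = 0}
  zero_mem' := Nnorm_zero hp
  add_mem' := by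
    intro a b ha hb
    refine le_antisymm ?_ (Nnorm_nonneg hp _)
    calc Nnorm p μ (a + b) ≤ Nnorm p μ a + Nnorm p μ b := Nnorm_add_le hp a b
      _ = 0 := by rw [Set.mem_setOf_eq] at ha hb; rw [ha, hb, add_zero]
  smul_mem' := by
    intro c x hx
    rw [Set.mem_setOf_eq] at hx ⊢
    rw [Nnorm_smul hp, hx, mul_zero]

lemma mem_nullSpace {x : E} : x ∈ nullSpace p μ hp ↔ Nnorm p μ x = 0 := Iff.rfl

/-- Type synonym blocking mathlib's quotient-norm instances. -/
def XSp : Type u := E ⧸ nullSpace p μ hp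

noncomputable instance : AddCommGroup (XSp p μ hp) :=
  inferInstanceAs (AddCommGroup (E ⧸ nullSpace p μ hp))

noncomputable instance : Module ℝ (XSp p μ hp) :=
  inferInstanceAs (Module ℝ (E ⧸ nullSpace p μ hp))

noncomputable def XSp.mk (x : E) : XSp p μ hp :=
  (Submodule.Quotient.mk x : E ⧸ nullSpace p μ hp)

lemma XSp.mk_surjective : Function.Surjective (XSp.mk p μ hp) :=
  fun z => Submodule.Quotient.mk_surjective _ (z : E ⧸ nullSpace p μ hp)

lemma XSp.mk_add (a b : E) : XSp.mk p μ hp (a + b) = XSp.mk p μ hp a + XSp.mk p μ hp b := by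
  show (Submodule.Quotient.mk (a + b) : E ⧸ nullSpace p μ hp) = Submodule.Quotient.mk a + Submodule.Quotient.mk b
  exact Submodule.Quotient.mk_add ..

lemma XSp.mk_smul (c : ℝ) (a : E) : XSp.mk p μ hp (c • a) = c • XSp.mk p μ hp a := by
  show (Submodule.Quotient.mk (c • a) : E ⧸ nullSpace p μ hp) = c • Submodule.Quotient.mk a
  exact Submodule.Quotient.mk_smul ..

lemma XSp.mk_sub (a b : E) : XSp.mk p μ hp (a - b) = XSp.mk p μ hp a - XSp.mk p μ hp b := by
  show (Submodule.Quotient.mk (a - b) : E ⧸ nullSpace p μ hp) = Submodule.Quotient.mk a - Submodule.Quotient.mk b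
  exact Submodule.Quotient.mk_sub ..

lemma XSp.mk_eq_mk_iff (a b : E) :
    XSp.mk p μ hp a = XSp.mk p μ hp b ↔ Nnorm p μ (a - b) = 0 := by
  show (Submodule.Quotient.mk a : E ⧸ nullSpace p μ hp) = Submodule.Quotient.mk b ↔ _
  rw [Submodule.Quotient.eq]
  exact mem_nullSpace p μ hp

noncomputable def quotAGNorm : AddGroupNorm (XSp p μ hp) where
  toFun := fun z => Quotient.liftOn' (z : E ⧸ nullSpace p μ hp) (Nnorm p μ) (by
    intro a b hab
    have hmem : a - b ∈ nullSpace p μ hp := by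
      rwa [Submodule.quotientRel_def] at hab
    exact Nnorm_congr hp (mem_nullSpace p μ hp |>.mp hmem))
  map_zero' := Nnorm_zero hp
  add_le' := by
    intro z w
    obtain ⟨a, rfl⟩ := XSp.mk_surjective p μ hp z
    obtain ⟨b, rfl⟩ := XSp.mk_surjective p μ hp w
    rw [← XSp.mk_add]
    exact Nnorm_add_le hp a b
  neg' := by
    intro z
    obtain ⟨a, rfl⟩ := XSp.mk_surjective p μ hp z
    show Quotient.liftOn' ((- XSp.mk p μ hp a : XSp p μ hp) : E ⧸ nullSpace p μ hp) (Nnorm p μ) _ = _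
    have : (- XSp.mk p μ hp a : XSp p μ hp) = XSp.mk p μ hp (-a) := by
      show -(Submodule.Quotient.mk a : E ⧸ nullSpace p μ hp) = Submodule.Quotient.mk (-a)
      rw [← Submodule.Quotient.mk_neg]
    rw [this]
    exact Nnorm_neg hp a
  eq_zero_of_map_eq_zero' := by
    intro z hz
    obtain ⟨a, rfl⟩ := XSp.mk_surjective p μ hp z
    have hz' : Nnorm p μ a = 0 := hz
    have h0 : (0 : XSp p μ hp) = XSp.mk p μ hp 0 := rfl
    rw [h0, XSp.mk_eq_mk_iff, sub_zero]
    exact hz'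

noncomputable instance : NormedAddCommGroup (XSp p μ hp) :=
  (quotAGNorm p μ hp).toNormedAddCommGroup

lemma XSp.norm_mk (x : E) : ‖XSp.mk p μ hp x‖ = Nnorm p μ x := rfl

noncomputable instance : NormedSpace ℝ (XSp p μ hp) where
  norm_smul_le := by
    intro c z
    obtain ⟨a, rfl⟩ := XSp.mk_surjective p μ hp z
    rw [← XSp.mk_smul, XSp.norm_mk, XSp.norm_mk, Nnorm_smul hp]
    simp [Real.norm_eq_abs]

noncomputable def Rmap : E →L[ℝ] XSp p μ hp :=
  LinearMap.mkContinuous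
    { toFun := XSp.mk p μ hp
      map_add' := XSp.mk_add p μ hp
      map_smul' := fun c a => by simpa using XSp.mk_smul p μ hp c a }
    2 (by
      intro x
      show ‖XSp.mk p μ hp x‖ ≤ 2 * ‖x‖
      rw [XSp.norm_mk]
      exact Nnorm_le_two_norm hp x)

lemma Rmap_apply (x : E) : Rmap p μ hp x = XSp.mk p μ hp x := rfl

end Quot

section FSide
variable {F : Type v} [NormedAddCommGroup F] [Lattice F] [IsOrderedAddMonoid F] [HasSolidNorm F] [NormedSpace ℝ F]

instance : BorelSpace (PosBidualBall F) := ⟨rfl⟩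

lemma continuous_evalPBB (φ : F →L[ℝ] ℝ) :
    Continuous (fun ψ : PosBidualBall F => ψ.1 φ) := by
  have h1 : Continuous (fun ψ : WeakDual ℝ (F →L[ℝ] ℝ) => ψ φ) := WeakDual.eval_continuous φ
  exact h1.comp continuous_subtype_val

variable {r : ℝ} (hr : 1 ≤ r) (ν : Measure (PosBidualBall F)) [IsProbabilityMeasure ν]
include hr

lemma integrable_evalB_rpow (φ : F →L[ℝ] ℝ) :
    Integrable (fun ψ : PosBidualBall F => (ψ.1 φ) ^ r) ν := by
  have hc : Continuous (fun ψ : PosBidualBall F => (ψ.1 φ) ^ r) :=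
    (continuous_rpow_const (lt_of_lt_of_le zero_lt_one hr)).comp (continuous_evalPBB φ)
  refine Integrable.mono' (integrable_const (‖φ‖ ^ r)) hc.aestronglyMeasurable ?_
  refine Filter.Eventually.of_forall (fun ψ => ?_)
  rw [Real.norm_eq_abs]
  calc |(ψ.1 φ) ^ r| ≤ |ψ.1 φ| ^ r := Real.abs_rpow_le_abs_rpow _ _
    _ ≤ ‖φ‖ ^ r := Real.rpow_le_rpow (abs_nonneg _) (ψ.2.1 φ) (le_trans zero_le_one hr)

lemma Jint_nonneg {φ : F →L[ℝ] ℝ} (hφ : ∀ z, 0 ≤ z → 0 ≤ φ z) :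
    0 ≤ ∫ ψ : PosBidualBall F, (ψ.1 φ) ^ r ∂ν :=
  integral_nonneg fun ψ => Real.rpow_nonneg (ψ.2.2 φ hφ) r

lemma J_le_one {φ : F →L[ℝ] ℝ} (hφ : ∀ z, 0 ≤ z → 0 ≤ φ z) (hφ1 : ‖φ‖ ≤ 1) :
    (∫ ψ : PosBidualBall F, (ψ.1 φ) ^ r ∂ν) ^ (1 / r) ≤ 1 := by
  have hint : ∫ ψ : PosBidualBall F, (ψ.1 φ) ^ r ∂ν ≤ 1 := by
    have h1 : ∫ ψ : PosBidualBall F, (ψ.1 φ) ^ r ∂ν ≤ ∫ _ψ : PosBidualBall F, (1:ℝ) ∂ν := by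
      refine integral_mono (integrable_evalB_rpow hr ν φ) (integrable_const 1) (fun ψ => ?_)
      exact Real.rpow_le_one (ψ.2.2 φ hφ) (((le_abs_self _).trans (ψ.2.1 φ)).trans hφ1) (le_trans zero_le_one hr)
    simpa using h1
  calc (∫ ψ : PosBidualBall F, (ψ.1 φ) ^ r ∂ν) ^ (1 / r)
      ≤ (1:ℝ) ^ (1 / r) := Real.rpow_le_rpow (Jint_nonneg hr ν hφ) hint (by positivity)
    _ = 1 := Real.one_rpow _

end FSide

section Key
variable {m : ℕ} {E : Fin m → Type u}
    [∀ j, NormedAddCommGroup (E j)] [∀ j, Lattice (E j)]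
      [∀ j, IsOrderedAddMonoid (E j)] [∀ j, HasSolidNorm (E j)] [∀ j, NormedSpace ℝ (E j)]
    {F : Type v} [NormedAddCommGroup F] [Lattice F] [IsOrderedAddMonoid F] [HasSolidNorm F] [NormedSpace ℝ F]
    {r : ℝ} {pj : Fin m → ℝ}
    (T : ContinuousMultilinearMap ℝ E F) {C : ℝ}
    (μ : ∀ j, Measure (PosDualBall (E j))) [∀ j, IsProbabilityMeasure (μ j)]
    (ν : Measure (PosBidualBall F)) [IsProbabilityMeasure ν]

lemma key_dom (hr : 1 ≤ r) (hpj : ∀ j, 1 ≤ pj j) (hC : 0 ≤ C)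
    (hdom : ∀ (x : ∀ j, E j) (φ : F →L[ℝ] ℝ),
      (∀ j, 0 ≤ x j) → (∀ z, 0 ≤ z → 0 ≤ φ z) →
      |φ (T x)| ≤
        C * (∏ j, (∫ ω : PosDualBall (E j), (ω.1 (x j)) ^ (pj j) ∂(μ j)) ^ (1 / pj j)) *
          (∫ ψ : PosBidualBall F, (ψ.1 φ) ^ r ∂ν) ^ (1 / r))
    (x : ∀ j, E j) (φ : F →L[ℝ] ℝ) (hφ : ∀ z, 0 ≤ z → 0 ≤ φ z) :
    |φ (T x)| ≤ C * (∏ j, Nnorm (pj j) (μ j) (x j)) *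
      (∫ ψ : PosBidualBall F, (ψ.1 φ) ^ r ∂ν) ^ (1 / r) := by
  classical
  set J := (∫ ψ : PosBidualBall F, (ψ.1 φ) ^ r ∂ν) ^ (1 / r) with hJdef
  set P : ∀ j, E j := fun j => (x j)⁺ with hP
  set Q : ∀ j, E j := fun j => (x j)⁻ with hQ
  have hxPQ : x = P + fun j => (-1 : ℝ) • Q j := by
    funext j
    show x j = P j + (-1 : ℝ) • Q j
    rw [hP, hQ]
    simp only [neg_one_smul]
    rw [← sub_eq_add_neg, posPart_sub_negPart]
  have hsplit : T x = ∑ s : Finset (Fin m), T (s.piecewise P (fun j => (-1 : ℝ) • Q j)) := by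
    conv_lhs => rw [hxPQ]
    exact T.toMultilinearMap.map_add_univ P _
  have hterm : ∀ s : Finset (Fin m),
      |φ (T (s.piecewise P (fun j => (-1 : ℝ) • Q j)))| = |φ (T (s.piecewise P Q))| := by
    intro s
    have e1 : s.piecewise P (fun j => (-1 : ℝ) • Q j)
        = fun j => (if j ∈ s then (1:ℝ) else -1) • (s.piecewise P Q j) := by
      funext j
      by_cases h : j ∈ s <;> simp [Finset.piecewise, h]
    rw [e1,
      show T (fun j => (if j ∈ s then (1:ℝ) else -1) • (s.piecewise P Q j))
        = (∏ j, if j ∈ s then (1:ℝ) else -1) • T (s.piecewise P Q) from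
        T.toMultilinearMap.map_smul_univ _ _,
      _root_.map_smul, smul_eq_mul, abs_mul]
    have habs : |∏ j, if j ∈ s then (1:ℝ) else -1| = 1 := by
      rw [Finset.abs_prod,
        Finset.prod_congr rfl (fun j _ => show |if j ∈ s then (1:ℝ) else -1| = 1 by
          by_cases h : j ∈ s <;> simp [h])]
      simp
    rw [habs, one_mul]
  have hbound : ∀ s : Finset (Fin m),
      |φ (T (s.piecewise P Q))| ≤
        C * (∏ j, gfun (pj j) (μ j) (s.piecewise P Q j)) * J := by
    intro s
    exact hdom _ φ (fun j => by
      by_cases h : j ∈ s <;>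
        simp [Finset.piecewise, h, hP, hQ, posPart_nonneg, negPart_nonneg]) hφ
  have hps : ∀ s : Finset (Fin m), (∏ j, gfun (pj j) (μ j) (s.piecewise P Q j))
      = (∏ j ∈ s, gfun (pj j) (μ j) (P j)) *
        ∏ j ∈ Finset.univ \ s, gfun (pj j) (μ j) (Q j) := by
    intro s
    rw [show (fun j => gfun (pj j) (μ j) (s.piecewise P Q j))
        = fun j => if j ∈ s then gfun (pj j) (μ j) (P j) else gfun (pj j) (μ j) (Q j) from
      funext fun j => by by_cases h : j ∈ s <;> simp [Finset.piecewise, h]]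
    rw [Finset.prod_ite]
    congr 1
    · congr 1
      ext j
      simp
    · congr 1
      rw [Finset.filter_not]
      congr 1
      ext j
      simp
  have hsum : ∑ s : Finset (Fin m), (∏ j, gfun (pj j) (μ j) (s.piecewise P Q j))
      = ∏ j, Nnorm (pj j) (μ j) (x j) := by
    have h1 : ∏ j, Nnorm (pj j) (μ j) (x j)
        = ∏ j, (gfun (pj j) (μ j) (P j) + gfun (pj j) (μ j) (Q j)) := rfl
    rw [h1, Finset.prod_add, ← Finset.powerset_univ]
    exact Finset.sum_congr rfl (fun s _ => hps s)
  calc |φ (T x)|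
      = |∑ s : Finset (Fin m), φ (T (s.piecewise P (fun j => (-1:ℝ) • Q j)))| := by
        rw [hsplit, map_sum]
    _ ≤ ∑ s : Finset (Fin m), |φ (T (s.piecewise P (fun j => (-1:ℝ) • Q j)))| :=
        Finset.abs_sum_le_sum_abs _ _
    _ = ∑ s : Finset (Fin m), |φ (T (s.piecewise P Q))| :=
        Finset.sum_congr rfl (fun s _ => hterm s)
    _ ≤ ∑ s : Finset (Fin m), C * (∏ j, gfun (pj j) (μ j) (s.piecewise P Q j)) * J :=
        Finset.sum_le_sum (fun s _ => hbound s)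
    _ = C * (∏ j, Nnorm (pj j) (μ j) (x j)) * J := by
        rw [show (fun s : Finset (Fin m) => C * (∏ j, gfun (pj j) (μ j) (s.piecewise P Q j)) * J)
            = fun s : Finset (Fin m) => (C * J) * (∏ j, gfun (pj j) (μ j) (s.piecewise P Q j))
          from funext fun s => by ring, ← Finset.mul_sum, hsum]
        ring

lemma T_kill (hr : 1 ≤ r) (hpj : ∀ j, 1 ≤ pj j) (hC : 0 ≤ C)
    (hdom : ∀ (x : ∀ j, E j) (φ : F →L[ℝ] ℝ),
      (∀ j, 0 ≤ x j) → (∀ z, 0 ≤ z → 0 ≤ φ z) →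
      |φ (T x)| ≤
        C * (∏ j, (∫ ω : PosDualBall (E j), (ω.1 (x j)) ^ (pj j) ∂(μ j)) ^ (1 / pj j)) *
          (∫ ψ : PosBidualBall F, (ψ.1 φ) ^ r ∂ν) ^ (1 / r))
    (x : ∀ j, E j) (k : Fin m) (hk : Nnorm (pj k) (μ k) (x k) = 0) : T x = 0 := by
  have h0 : ∀ φ : F →L[ℝ] ℝ, (∀ z, 0 ≤ z → 0 ≤ φ z) → φ (T x) = 0 := by
    intro φ hφ
    have h := key_dom T μ ν hr hpj hC hdom x φ hφ
    rw [Finset.prod_eq_zero (Finset.mem_univ k) hk, mul_zero, zero_mul] at h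
    exact abs_eq_zero.mp (le_antisymm h (abs_nonneg _))
  obtain ⟨φ1, h1pos, _, h1val⟩ := exists_pos_functional (T x)
  obtain ⟨φ2, h2pos, _, h2val⟩ := exists_pos_functional (-(T x))
  have e1 : (T x)⁺ = 0 := by
    have : ‖(T x)⁺‖ = 0 := by rw [← h1val, h0 φ1 h1pos]
    exact norm_eq_zero.mp this
  have e2 : (T x)⁻ = 0 := by
    have h2' : φ2 (-(T x)) = 0 := by rw [map_neg, h0 φ2 h2pos, neg_zero]
    have : ‖(T x)⁻‖ = 0 := by rw [← posPart_neg, ← h2val, h2']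
    exact norm_eq_zero.mp this
  have := posPart_sub_negPart (T x)
  rw [e1, e2, sub_zero] at this
  exact this.symm

lemma T_norm_bound (hr : 1 ≤ r) (hpj : ∀ j, 1 ≤ pj j) (hC : 0 ≤ C)
    (hdom : ∀ (x : ∀ j, E j) (φ : F →L[ℝ] ℝ),
      (∀ j, 0 ≤ x j) → (∀ z, 0 ≤ z → 0 ≤ φ z) →
      |φ (T x)| ≤
        C * (∏ j, (∫ ω : PosDualBall (E j), (ω.1 (x j)) ^ (pj j) ∂(μ j)) ^ (1 / pj j)) *
          (∫ ψ : PosBidualBall F, (ψ.1 φ) ^ r ∂ν) ^ (1 / r))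
    (x : ∀ j, E j) :
    ‖T x‖ ≤ (2 * C) * ∏ j, Nnorm (pj j) (μ j) (x j) := by
  have hProd : 0 ≤ ∏ j, Nnorm (pj j) (μ j) (x j) :=
    Finset.prod_nonneg fun j _ => Nnorm_nonneg (hpj j) _
  have main : ∀ w : F, ∀ φ : F →L[ℝ] ℝ, (∀ z, 0 ≤ z → 0 ≤ φ z) → ‖φ‖ ≤ 1 →
      |φ (T x)| ≤ C * ∏ j, Nnorm (pj j) (μ j) (x j) := by
    intro w φ hφpos hφ1
    have h := key_dom T μ ν hr hpj hC hdom x φ hφpos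
    have hJ := J_le_one (F := F) hr ν hφpos hφ1
    calc |φ (T x)| ≤ C * (∏ j, Nnorm (pj j) (μ j) (x j)) *
          (∫ ψ : PosBidualBall F, (ψ.1 φ) ^ r ∂ν) ^ (1 / r) := h
      _ ≤ C * (∏ j, Nnorm (pj j) (μ j) (x j)) * 1 := by
          apply mul_le_mul_of_nonneg_left hJ (by positivity)
      _ = C * ∏ j, Nnorm (pj j) (μ j) (x j) := by ring
  obtain ⟨φ1, h1pos, h1n, h1val⟩ := exists_pos_functional (T x)
  obtain ⟨φ2, h2pos, h2n, h2val⟩ := exists_pos_functional (-(T x))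
  have b1 : ‖(T x)⁺‖ ≤ C * ∏ j, Nnorm (pj j) (μ j) (x j) := by
    rw [← h1val]
    exact (le_abs_self _).trans (main (T x) φ1 h1pos h1n)
  have b2 : ‖(T x)⁻‖ ≤ C * ∏ j, Nnorm (pj j) (μ j) (x j) := by
    rw [← posPart_neg, ← h2val]
    calc φ2 (-(T x)) ≤ |φ2 (-(T x))| := le_abs_self _
      _ = |φ2 (T x)| := by rw [map_neg, abs_neg]
      _ ≤ _ := main (T x) φ2 h2pos h2n
  have hsplit : ‖T x‖ ≤ ‖(T x)⁺‖ + ‖(T x)⁻‖ := by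
    conv_lhs => rw [← posPart_sub_negPart (T x)]
    exact norm_sub_le _ _
  linarith

end Key


/-- Factorization direction of Kwapień's theorem: a positive `(p₁,…,p_m;r)`-dominated
operator, given via its Pietsch domination measures, factors as `T = S ∘ (R₁,…,R_m)`
where each `R_j` is positive `p_j`-summing with `π⁺_{p_j}(R_j) ≤ 1` (obtained from the
canonical map into `L_{p_j}(μ_j)`) and `S` is a Cohen positive strongly `r*`-summing
`m`-linear operator. -/
theorem kwapien_factorization_direction
    {m : ℕ} {E : Fin m → Type u}
    [∀ j, NormedAddCommGroup (E j)] [∀ j, Lattice (E j)]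
    [∀ j, IsOrderedAddMonoid (E j)] [∀ j, HasSolidNorm (E j)] [∀ j, NormedSpace ℝ (E j)]
    {F : Type v} [NormedAddCommGroup F] [Lattice F] [IsOrderedAddMonoid F] [HasSolidNorm F] [NormedSpace ℝ F]
    (p r rstar : ℝ) (pj : Fin m → ℝ)
    (hr : 1 ≤ r) (hpj : ∀ j, 1 ≤ pj j) (hp : 1 ≤ p)
    (hhol : 1 / p = (∑ j, 1 / pj j) + 1 / r) (hconj : 1 / r + 1 / rstar = 1)
    (T : ContinuousMultilinearMap ℝ E F) (C : ℝ) (hC : 0 < C)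
    (μ : ∀ j, Measure (PosDualBall (E j))) [∀ j, IsProbabilityMeasure (μ j)]
    (ν : Measure (PosBidualBall F)) [IsProbabilityMeasure ν]
    (hdom : ∀ (x : ∀ j, E j) (φ : F →L[ℝ] ℝ),
      (∀ j, 0 ≤ x j) → (∀ z, 0 ≤ z → 0 ≤ φ z) →
      |φ (T x)| ≤
        C * (∏ j, (∫ ω : PosDualBall (E j), (ω.1 (x j)) ^ (pj j) ∂(μ j)) ^ (1 / pj j)) *
          (∫ ψ : PosBidualBall F, (ψ.1 φ) ^ r ∂ν) ^ (1 / r)) :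
    ∃ (X : Fin m → Type u) (_ : ∀ j, NormedAddCommGroup (X j))
      (_ : ∀ j, NormedSpace ℝ (X j)) (R : ∀ j, E j →L[ℝ] X j)
      (S : ContinuousMultilinearMap ℝ X F),
      (∀ j, IsPosSumming (pj j) (R j) 1) ∧
      IsCohenPosStronglySumming rstar r S C ∧
      ∀ x : ∀ j, E j, T x = S (fun j => R j (x j)) := by
  classical
  have hCnn : (0:ℝ) ≤ C := hC.le
  have hr0 : (0:ℝ) < r := lt_of_lt_of_le zero_lt_one hr
  -- representatives
  let rep : ∀ j, XSp (pj j) (μ j) (hpj j) → E j :=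
    fun j => Function.surjInv (XSp.mk_surjective (pj j) (μ j) (hpj j))
  have hrep : ∀ j z, XSp.mk (pj j) (μ j) (hpj j) (rep j z) = z :=
    fun j z => Function.surjInv_eq _ z
  -- well-definedness
  have Tcongr : ∀ x x' : (∀ j, E j),
      (∀ j, XSp.mk (pj j) (μ j) (hpj j) (x j) = XSp.mk (pj j) (μ j) (hpj j) (x' j)) →
      T x = T x' := by
    intro x x' h
    have key : ∀ s : Finset (Fin m), T (fun j => if j ∈ s then x j else x' j) = T x' := by
      intro s
      induction s using Finset.induction_on with
      | empty => simp
      | @insert k s hk ih =>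
        have e1 : (fun j => if j ∈ insert k s then x j else x' j)
            = Function.update (fun j => if j ∈ s then x j else x' j) k (x k) := by
          funext j
          rcases eq_or_ne j k with rfl | hne
          · simp
          · simp [Function.update_of_ne hne, Finset.mem_insert, hne]
        have e2 : (fun j => if j ∈ s then x j else x' j)
            = Function.update (fun j => if j ∈ s then x j else x' j) k (x' k) := by
          funext j
          rcases eq_or_ne j k with rfl | hne
          · simp [hk]
          · simp [Function.update_of_ne hne]
        have e4 : T (Function.update (fun j => if j ∈ s then x j else x' j) k (x k - x' k))
            = 0 := by
          apply T_kill T μ ν hr hpj hCnn hdom _ k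
          rw [Function.update_self]
          exact (XSp.mk_eq_mk_iff (pj k) (μ k) (hpj k) (x k) (x' k)).mp (h k)
        have e3 := T.map_update_sub (fun j => if j ∈ s then x j else x' j) k (x k) (x' k)
        rw [e4] at e3
        have e5 : T (Function.update (fun j => if j ∈ s then x j else x' j) k (x k))
            = T (Function.update (fun j => if j ∈ s then x j else x' j) k (x' k)) := by
          have := e3.symm
          rwa [sub_eq_zero] at this
        rw [e1, e5, ← e2, ih]
    have := key Finset.univ
    simpa using this
  let Sfun : (∀ j, XSp (pj j) (μ j) (hpj j)) → F := fun z => T (fun j => rep j (z j))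
  have Smk : ∀ x : ∀ j, E j, Sfun (fun j => XSp.mk (pj j) (μ j) (hpj j) (x j)) = T x := by
    intro x
    apply Tcongr
    intro j
    rw [hrep]
  have hupd : ∀ (z : ∀ j, XSp (pj j) (μ j) (hpj j)) (i : Fin m) (u : E i),
      Function.update z i (XSp.mk (pj i) (μ i) (hpj i) u)
        = fun j => XSp.mk (pj j) (μ j) (hpj j)
            (Function.update (fun j => rep j (z j)) i u j) := by
    intro z i u
    funext j
    rcases eq_or_ne j i with rfl | hne
    · simp
    · simp [Function.update_of_ne hne, hrep]
  let Slin : MultilinearMap ℝ (fun j => XSp (pj j) (μ j) (hpj j)) F :=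
  { toFun := Sfun
    map_update_add' := by
      intro inst z i a b
      have hi : inst = (fun a b => instDecidableEqFin m a b) := Subsingleton.elim _ _
      subst hi
      obtain ⟨u, rfl⟩ := XSp.mk_surjective (pj i) (μ i) (hpj i) a
      obtain ⟨v, rfl⟩ := XSp.mk_surjective (pj i) (μ i) (hpj i) b
      rw [← XSp.mk_add, hupd, hupd, hupd, Smk, Smk, Smk]
      exact T.map_update_add _ i u v
    map_update_smul' := by
      intro inst z i c a
      have hi : inst = (fun a b => instDecidableEqFin m a b) := Subsingleton.elim _ _
      subst hi
      obtain ⟨u, rfl⟩ := XSp.mk_surjective (pj i) (μ i) (hpj i) a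
      rw [← XSp.mk_smul, hupd, hupd, Smk, Smk]
      exact T.map_update_smul _ i c u }
  have Sbound : ∀ z : (∀ j, XSp (pj j) (μ j) (hpj j)), ‖Slin z‖ ≤ (2 * C) * ∏ j, ‖z j‖ := by
    intro z
    have h1 : Slin z = T (fun j => rep j (z j)) := rfl
    have h2 : ∀ j, ‖z j‖ = Nnorm (pj j) (μ j) (rep j (z j)) := by
      intro j
      conv_lhs => rw [← hrep j (z j)]
      rw [XSp.norm_mk]
    rw [h1]
    calc ‖T (fun j => rep j (z j))‖
        ≤ (2 * C) * ∏ j, Nnorm (pj j) (μ j) (rep j (z j)) :=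
          T_norm_bound T μ ν hr hpj hCnn hdom _
      _ = (2 * C) * ∏ j, ‖z j‖ := by
          congr 1
          exact Finset.prod_congr rfl (fun j _ => (h2 j).symm)
  let S : ContinuousMultilinearMap ℝ (fun j => XSp (pj j) (μ j) (hpj j)) F :=
    Slin.mkContinuous (2 * C) Sbound
  have hScoe : ∀ z, S z = Sfun z := by
    intro z
    show (Slin.mkContinuous (2 * C) Sbound) z = Sfun z
    rw [MultilinearMap.coe_mkContinuous]
    rfl
  refine ⟨(fun j => XSp (pj j) (μ j) (hpj j)), (fun j => inferInstance), (fun j => inferInstance),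
    (fun j => Rmap (pj j) (μ j) (hpj j)), S, ?_, ?_, ?_⟩
  · -- positive summing
    intro j n x hx
    have hpjj : (0:ℝ) < pj j := lt_of_lt_of_le zero_lt_one (hpj j)
    have hnorm : ∀ i, ‖(Rmap (pj j) (μ j) (hpj j)) (x i)‖ = gfun (pj j) (μ j) (x i) := by
      intro i
      rw [Rmap_apply, XSp.norm_mk, Nnorm_of_nonneg (hpj j) (hx i)]
    have hbdd : BddAbove {s : ℝ | ∃ φ : E j →L[ℝ] ℝ, ‖φ‖ ≤ 1 ∧ (∀ y, 0 ≤ y → 0 ≤ φ y) ∧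
        s = (∑ i, (φ (x i)) ^ (pj j)) ^ (1 / pj j)} := by
      refine ⟨(∑ i, ‖x i‖ ^ (pj j)) ^ (1 / pj j), ?_⟩
      rintro s ⟨φ, hφ1, hφ2, rfl⟩
      apply Real.rpow_le_rpow
      · exact Finset.sum_nonneg fun i _ => Real.rpow_nonneg (hφ2 _ (hx i)) _
      · refine Finset.sum_le_sum fun i _ => Real.rpow_le_rpow (hφ2 _ (hx i)) ?_ hpjj.le
        calc φ (x i) ≤ ‖φ (x i)‖ := le_abs_self _
          _ ≤ ‖φ‖ * ‖x i‖ := φ.le_opNorm _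
          _ ≤ 1 * ‖x i‖ := by
              apply mul_le_mul_of_nonneg_right hφ1 (norm_nonneg _)
          _ = ‖x i‖ := one_mul _
      · positivity
    have hW0 : 0 ≤ wnormPos (pj j) x := by
      apply le_csSup hbdd
      refine ⟨0, by simp, by simp, ?_⟩
      have h0 : (∑ i, ((0 : E j →L[ℝ] ℝ) (x i)) ^ (pj j)) = 0 := by
        simp [Real.zero_rpow (ne_of_gt hpjj)]
      rw [h0, Real.zero_rpow (by positivity : (1:ℝ)/pj j ≠ 0)]
    have hptw : ∀ ω : PosDualBall (E j),
        (∑ i, (ω.1 (x i)) ^ (pj j)) ≤ (wnormPos (pj j) x) ^ (pj j) := by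
      intro ω
      have hsum0 : 0 ≤ ∑ i, (ω.1 (x i)) ^ (pj j) :=
        Finset.sum_nonneg fun i _ => Real.rpow_nonneg (ω.2.2 _ (hx i)) _
      have hmem : ((∑ i, (ω.1 (x i)) ^ (pj j)) ^ (1 / pj j)) ≤ wnormPos (pj j) x := by
        apply le_csSup hbdd
        refine ⟨ω.1, ?_, ω.2.2, rfl⟩
        apply ContinuousLinearMap.opNorm_le_bound _ zero_le_one
        intro y
        rw [one_mul]
        exact ω.2.1 y
      calc ∑ i, (ω.1 (x i)) ^ (pj j)
          = ((∑ i, (ω.1 (x i)) ^ (pj j)) ^ (1 / pj j)) ^ (pj j) := by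
            rw [← Real.rpow_mul hsum0, one_div_mul_cancel (ne_of_gt hpjj), Real.rpow_one]
        _ ≤ (wnormPos (pj j) x) ^ (pj j) :=
            Real.rpow_le_rpow (Real.rpow_nonneg hsum0 _) hmem hpjj.le
    have hint : ∑ i, Ifun (pj j) (μ j) (x i) ≤ (wnormPos (pj j) x) ^ (pj j) := by
      have he : ∑ i, Ifun (pj j) (μ j) (x i)
          = ∫ ω : PosDualBall (E j), (∑ i, (ω.1 (x i)) ^ (pj j)) ∂(μ j) :=
        (integral_finset_sum _ (fun i _ => integrable_eval_rpow (hpj j) (x i))).symm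
      rw [he]
      calc ∫ ω : PosDualBall (E j), (∑ i, (ω.1 (x i)) ^ (pj j)) ∂(μ j)
          ≤ ∫ _ω : PosDualBall (E j), (wnormPos (pj j) x) ^ (pj j) ∂(μ j) := by
            refine integral_mono ?_ (integrable_const _) hptw
            exact integrable_finset_sum _ (fun i _ => integrable_eval_rpow (hpj j) (x i))
        _ = (wnormPos (pj j) x) ^ (pj j) := by simp
    have h1 : ∑ i, ‖(Rmap (pj j) (μ j) (hpj j)) (x i)‖ ^ (pj j)
        = ∑ i, Ifun (pj j) (μ j) (x i) := by
      refine Finset.sum_congr rfl fun i _ => ?_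
      rw [hnorm i, gfun, ← Real.rpow_mul (Ifun_nonneg (hpj j) (hx i)),
        one_div_mul_cancel (ne_of_gt hpjj), Real.rpow_one]
    rw [one_mul, h1]
    calc (∑ i, Ifun (pj j) (μ j) (x i)) ^ (1 / pj j)
        ≤ ((wnormPos (pj j) x) ^ (pj j)) ^ (1 / pj j) := by
          apply Real.rpow_le_rpow _ hint (by positivity)
          exact Finset.sum_nonneg fun i _ => Ifun_nonneg (hpj j) (hx i)
      _ = wnormPos (pj j) x := by
          rw [← Real.rpow_mul hW0, mul_one_div, div_self (ne_of_gt hpjj), Real.rpow_one]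
  · -- Cohen positive strongly summing
    intro n z y hy
    set w : Fin n → ∀ j, E j := fun i j => rep j (z i j) with hw
    have hSz : ∀ i, S (z i) = T (w i) := by
      intro i
      rw [hScoe]
    have hznorm : ∀ i j, ‖z i j‖ = Nnorm (pj j) (μ j) (w i j) := by
      intro i j
      conv_lhs => rw [← hrep j (z i j)]
      rw [XSp.norm_mk]
    set A : Fin n → ℝ := fun i => ∏ j, Nnorm (pj j) (μ j) (w i j) with hA
    set Jy : Fin n → ℝ := fun i => (∫ ψ : PosBidualBall F, (ψ.1 (y i)) ^ r ∂ν) ^ (1/r) with hJy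
    have hA0 : ∀ i, 0 ≤ A i := fun i => Finset.prod_nonneg fun j _ => Nnorm_nonneg (hpj j) _
    have hJy0 : ∀ i, 0 ≤ Jy i := fun i => Real.rpow_nonneg (Jint_nonneg hr ν (hy i)) _
    have hAz : ∀ i, A i = ∏ j, ‖z i j‖ := by
      intro i
      exact (Finset.prod_congr rfl fun j _ => (hznorm i j).symm)
    have step1 : ∀ i, |y i (S (z i))| ≤ C * (A i * Jy i) := by
      intro i
      rw [hSz i]
      have h := key_dom T μ ν hr hpj hCnn hdom (w i) (y i) (hy i)
      calc |y i (T (w i))| ≤ C * A i * Jy i := h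
        _ = C * (A i * Jy i) := by ring
    have step2 : ∑ i, |y i (S (z i))| ≤ C * ∑ i, A i * Jy i := by
      rw [Finset.mul_sum]
      exact Finset.sum_le_sum fun i _ => step1 i
    set MS := {s : ℝ | ∃ ψ : (F →L[ℝ] ℝ) →L[ℝ] ℝ, ‖ψ‖ ≤ 1 ∧
        s = (∑ i, |ψ (y i)| ^ r) ^ (1 / r)} with hMS
    have hbddM : BddAbove MS := by
      refine ⟨(∑ i, ‖y i‖ ^ r) ^ (1/r), ?_⟩
      rintro s ⟨ψ, hψ, rfl⟩
      apply Real.rpow_le_rpow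
      · exact Finset.sum_nonneg fun i _ => Real.rpow_nonneg (abs_nonneg _) _
      · refine Finset.sum_le_sum fun i _ => Real.rpow_le_rpow (abs_nonneg _) ?_ hr0.le
        calc |ψ (y i)| = ‖ψ (y i)‖ := rfl
          _ ≤ ‖ψ‖ * ‖y i‖ := ψ.le_opNorm _
          _ ≤ 1 * ‖y i‖ := mul_le_mul_of_nonneg_right hψ (norm_nonneg _)
          _ = ‖y i‖ := one_mul _
      · positivity
    have hM0 : 0 ≤ sSup MS := by
      apply le_csSup hbddM
      refine ⟨0, ?_, ?_⟩
      · apply ContinuousLinearMap.opNorm_le_bound _ zero_le_one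
        intro φ
        simp
      have h0 : (∑ i, |(0 : (F →L[ℝ] ℝ) →L[ℝ] ℝ) (y i)| ^ r) = 0 := by
        simp [Real.zero_rpow (ne_of_gt hr0)]
      rw [h0, Real.zero_rpow (by positivity : (1:ℝ)/r ≠ 0)]
    have step5 : (∑ i, (Jy i) ^ r) ^ (1/r) ≤ sSup MS := by
      have he : ∀ i, (Jy i) ^ r = ∫ ψ : PosBidualBall F, (ψ.1 (y i)) ^ r ∂ν := by
        intro i
        rw [hJy]
        simp only
        rw [← Real.rpow_mul (Jint_nonneg hr ν (hy i)), one_div_mul_cancel (ne_of_gt hr0),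
          Real.rpow_one]
      have hptw : ∀ ψ : PosBidualBall F, (∑ i, (ψ.1 (y i)) ^ r) ≤ (sSup MS) ^ r := by
        intro ψ
        have hψpos : ∀ i, 0 ≤ ψ.1 (y i) := fun i => ψ.2.2 (y i) (hy i)
        have hsum0 : 0 ≤ ∑ i, (ψ.1 (y i)) ^ r :=
          Finset.sum_nonneg fun i _ => Real.rpow_nonneg (hψpos i) _
        have hmem : ((∑ i, |ψ.1 (y i)| ^ r) ^ (1/r)) ∈ MS := by
          refine ⟨ψ.1, ?_, rfl⟩
          apply ContinuousLinearMap.opNorm_le_bound _ zero_le_one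
          intro φ
          rw [one_mul]
          exact ψ.2.1 φ
        have habs : (∑ i, |ψ.1 (y i)| ^ r) = ∑ i, (ψ.1 (y i)) ^ r :=
          Finset.sum_congr rfl fun i _ => by rw [abs_of_nonneg (hψpos i)]
        have hle : ((∑ i, (ψ.1 (y i)) ^ r) ^ (1/r)) ≤ sSup MS := by
          rw [← habs]
          exact le_csSup hbddM hmem
        calc ∑ i, (ψ.1 (y i)) ^ r
            = ((∑ i, (ψ.1 (y i)) ^ r) ^ (1/r)) ^ r := by
              rw [← Real.rpow_mul hsum0, one_div_mul_cancel (ne_of_gt hr0), Real.rpow_one]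
          _ ≤ (sSup MS) ^ r :=
              Real.rpow_le_rpow (Real.rpow_nonneg hsum0 _) hle hr0.le
      have hint : ∑ i, (Jy i) ^ r ≤ (sSup MS) ^ r := by
        rw [Finset.sum_congr rfl (fun i _ => he i),
          ← integral_finset_sum _ (fun i _ => integrable_evalB_rpow hr ν (y i))]
        calc ∫ ψ : PosBidualBall F, (∑ i, (ψ.1 (y i)) ^ r) ∂ν
            ≤ ∫ _ψ : PosBidualBall F, (sSup MS) ^ r ∂ν := by
              refine integral_mono ?_ (integrable_const _) hptw
              exact integrable_finset_sum _ (fun i _ => integrable_evalB_rpow hr ν (y i))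
          _ = (sSup MS) ^ r := by simp
      calc (∑ i, (Jy i) ^ r) ^ (1/r)
          ≤ ((sSup MS) ^ r) ^ (1/r) := by
            apply Real.rpow_le_rpow _ hint (by positivity)
            exact Finset.sum_nonneg fun i _ => Real.rpow_nonneg (hJy0 i) _
        _ = sSup MS := by
            rw [← Real.rpow_mul hM0, mul_one_div, div_self (ne_of_gt hr0), Real.rpow_one]
    have hP0 : 0 ≤ (∑ i, ∏ j, ‖z i j‖ ^ rstar) ^ (1 / rstar) := by
      apply Real.rpow_nonneg
      exact Finset.sum_nonneg fun i _ => Finset.prod_nonneg fun j _ =>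
        Real.rpow_nonneg (norm_nonneg _) _
    have step3 : ∑ i, A i * Jy i
        ≤ (∑ i, ∏ j, ‖z i j‖ ^ rstar) ^ (1 / rstar) * (∑ i, (Jy i) ^ r) ^ (1/r) := by
      rcases eq_or_lt_of_le hr with h1 | h1
      · -- r = 1, rstar = 0, m = 0
        have hre : r = 1 := h1.symm
        have hrs : rstar = 0 := by
          rw [hre] at hconj
          norm_num at hconj
          exact hconj
        have hme : IsEmpty (Fin m) := by
          by_contra hne
          rw [not_isEmpty_iff] at hne
          obtain ⟨j0⟩ := hne
          have h1p : 1 / p ≤ 1 := by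
            rw [div_le_one (lt_of_lt_of_le zero_lt_one hp)]
            exact hp
          have hsum : 1 / pj j0 ≤ ∑ j, 1 / pj j := by
            refine Finset.single_le_sum (f := fun j => 1 / pj j) ?_ (Finset.mem_univ j0)
            intro j _
            have := lt_of_lt_of_le zero_lt_one (hpj j)
            positivity
          have hpos : 0 < 1 / pj j0 := by
            have := lt_of_lt_of_le zero_lt_one (hpj j0)
            positivity
          have hxx : (1:ℝ) / r = 1 := by rw [hre]; norm_num
          rw [hxx] at hhol
          linarith
        have hA1 : ∀ i, A i = 1 := by
          intro i
          rw [hA]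
          simp only
          rw [Finset.univ_eq_empty, Finset.prod_empty]
        have hPfac : (∑ i, ∏ j, ‖z i j‖ ^ rstar) ^ (1 / rstar) = 1 := by
          rw [hrs]
          have : ∀ i : Fin n, (∏ j, ‖z i j‖ ^ (0:ℝ)) = 1 := by
            intro i
            rw [Finset.univ_eq_empty, Finset.prod_empty]
          rw [Finset.sum_congr rfl (fun i _ => this i)]
          norm_num
        rw [hPfac, one_mul]
        have hq : (∑ i, (Jy i) ^ r) ^ (1/r) = ∑ i, Jy i := by
          rw [hre]
          simp [Real.rpow_one]
        rw [hq]
        apply le_of_eq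
        exact Finset.sum_congr rfl fun i _ => by rw [hA1 i, one_mul]
      · -- r > 1
        have hinv : 1 / rstar = 1 - 1 / r := by linarith
        have hr1 : 1 / r < 1 := by
          rw [div_lt_one hr0]
          exact h1
        have hinvpos : 0 < 1 / rstar := by rw [hinv]; linarith
        have hrspos : 0 < rstar := one_div_pos.mp hinvpos
        have hrs1 : 1 < rstar := by
          have h2 : 1 / rstar < 1 := by
            rw [hinv]
            have h3 : 0 < 1 / r := by positivity
            linarith
          rwa [div_lt_one hrspos] at h2
        have hcj : rstar.HolderConjugate r := Real.holderConjugate_iff.mpr ⟨hrs1, by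
          rw [inv_eq_one_div, inv_eq_one_div]
          linarith⟩
        have hhold := Real.inner_le_Lp_mul_Lq_of_nonneg (s := Finset.univ) hcj
          (fun i _ => hA0 i) (fun i _ => hJy0 i)
        refine hhold.trans ?_
        apply mul_le_mul_of_nonneg_right _ (Real.rpow_nonneg
          (Finset.sum_nonneg fun i _ => Real.rpow_nonneg (hJy0 i) _) _)
        apply le_of_eq
        congr 1
        refine Finset.sum_congr rfl fun i _ => ?_
        rw [hAz i, ← Real.finset_prod_rpow _ _ (fun j _ => norm_nonneg _)]
    calc ∑ i, |y i (S (z i))| ≤ C * ∑ i, A i * Jy i := step2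
      _ ≤ C * ((∑ i, ∏ j, ‖z i j‖ ^ rstar) ^ (1 / rstar) * (∑ i, (Jy i) ^ r) ^ (1/r)) :=
          mul_le_mul_of_nonneg_left step3 hCnn
      _ ≤ C * ((∑ i, ∏ j, ‖z i j‖ ^ rstar) ^ (1 / rstar) * sSup MS) :=
          mul_le_mul_of_nonneg_left (mul_le_mul_of_nonneg_left step5 hP0) hCnn
      _ = C * (∑ i, ∏ j, ‖z i j‖ ^ rstar) ^ (1 / rstar) * sSup MS := by ring
  · -- factorization
    intro x
    have : (fun j => (Rmap (pj j) (μ j) (hpj j)) (x j))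
        = fun j => XSp.mk (pj j) (μ j) (hpj j) (x j) := rfl
    rw [this, hScoe, Smk]
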